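/- For any matrix Δ ∈ ℝ^{p×k}, the matrix I + Δᵀ Δ is symmetric positive definite, and ‖ Δ (I + Δᵀ Δ)^{-1/2} ‖_2 = ‖Δ‖_2 / (1 + ‖Δ‖_2²)^{1/2}, where (I + Δᵀ Δ)^{-1/2} is the inverse of the unique symmetric positive definite square root of I + Δᵀ Δ and ‖·‖_2 is the spectral norm. -/

import Mathlib

open Matrix

open scoped ComplexOrder in
/-- The square root of a positive semidefinite matrix (the definition Mathlib had in
December 2024, since removed from Mathlib). -/
noncomputable def Matrix.PosSemidef.sqrt {n 𝕜 : Type*} [Fintype n] [RCLike 𝕜] [DecidableEq n]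
    {A : Matrix n n 𝕜} (hA : A.PosSemidef) : Matrix n n 𝕜 :=
  hA.1.eigenvectorUnitary.1 * diagonal ((↑) ∘ (√·) ∘ hA.1.eigenvalues) *
    (star hA.1.eigenvectorUnitary : Matrix n n 𝕜)

/-- The spectral (operator 2-) norm of a real matrix. -/
noncomputable def matSpectralNorm {p q : ℕ} (A : Matrix (Fin p) (Fin q) ℝ) : ℝ :=
  ‖LinearMap.toContinuousLinearMap (Matrix.toEuclideanLin A)‖

lemma exists_norm_eq_opNorm' {E F : Type*} [NormedAddCommGroup E] [NormedSpace ℝ E]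
    [FiniteDimensional ℝ E] [NormedAddCommGroup F] [NormedSpace ℝ F]
    (f : E →L[ℝ] F) (hf : f ≠ 0) : ∃ x : E, ‖x‖ = 1 ∧ ‖f x‖ = ‖f‖ := by
  obtain ⟨y, hy⟩ : ∃ y, f y ≠ 0 := by
    by_contra hc; push_neg at hc
    exact hf (ContinuousLinearMap.ext fun y => by simp [hc y])
  have hy0 : y ≠ 0 := fun h => hy (by simp [h])
  have hyn : ‖y‖ ≠ 0 := norm_ne_zero_iff.2 hy0
  have hsne : (Metric.sphere (0:E) 1).Nonempty :=
    ⟨‖y‖⁻¹ • y, by simp [norm_smul, inv_mul_cancel₀ hyn]⟩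
  obtain ⟨x, hx, hmax⟩ := (isCompact_sphere (0:E) 1).exists_isMaxOn hsne
    ((continuous_norm.comp f.continuous).continuousOn)
  have hx1 : ‖x‖ = 1 := by simpa using hx
  refine ⟨x, hx1, le_antisymm (by simpa [hx1] using f.le_opNorm x) ?_⟩
  refine f.opNorm_le_bound (norm_nonneg _) fun z => ?_
  rcases eq_or_ne z 0 with rfl | hz
  · simp
  · have hzn : ‖z‖ ≠ 0 := norm_ne_zero_iff.2 hz
    have hz' : ‖z‖⁻¹ • z ∈ Metric.sphere (0:E) 1 := by
      simp [norm_smul, inv_mul_cancel₀ hzn]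
    have h2 : ‖z‖⁻¹ * ‖f z‖ ≤ ‖f x‖ := by
      have := hmax hz'
      simpa [Function.comp, norm_smul] using this
    have hzp : (0:ℝ) < ‖z‖ := norm_pos_iff.2 hz
    calc ‖f z‖ = ‖z‖ * (‖z‖⁻¹ * ‖f z‖) := by field_simp
    _ ≤ ‖z‖ * ‖f x‖ := by
        apply mul_le_mul_of_nonneg_left _ hzp.le
        simpa using h2
    _ = ‖f x‖ * ‖z‖ := mul_comm _ _

set_option maxHeartbeats 2000000 in
/-- For any `Δ ∈ ℝ^{p×k}`, the matrix `I + Δᵀ Δ` is symmetric positive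
definite, and `‖Δ (I + Δᵀ Δ)^{-1/2}‖₂ = ‖Δ‖₂ / (1 + ‖Δ‖₂²)^{1/2}`, where
`(I + Δᵀ Δ)^{-1/2}` is the inverse of the unique symmetric positive definite square root
of `I + Δᵀ Δ`. -/
theorem norm_delta_inv_sqrt {p k : ℕ} (Δ : Matrix (Fin p) (Fin k) ℝ) :
    (1 + Δᵀ * Δ).PosDef ∧
    ∀ h : (1 + Δᵀ * Δ).PosSemidef,
      matSpectralNorm (Δ * (h.sqrt)⁻¹) =
        matSpectralNorm Δ / Real.sqrt (1 + matSpectralNorm Δ ^ 2) := by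
  have hpsd : (Δᵀ * Δ).PosSemidef := by
    have := Matrix.posSemidef_conjTranspose_mul_self Δ
    rwa [Matrix.conjTranspose_eq_transpose_of_trivial] at this
  have hpd : (1 + Δᵀ * Δ).PosDef := Matrix.PosDef.add_posSemidef Matrix.PosDef.one hpsd
  refine ⟨hpd, fun h => ?_⟩
  set S := h.sqrt with hSdef
  have hS : S.PosSemidef := by
    rw [hSdef, Matrix.PosSemidef.sqrt]
    have hU : (star h.1.eigenvectorUnitary : Matrix (Fin k) (Fin k) ℝ)
        = (h.1.eigenvectorUnitary : Matrix (Fin k) (Fin k) ℝ)ᴴ := rfl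
    rw [hU]
    exact (Matrix.PosSemidef.diagonal (by intro i; simp [Real.sqrt_nonneg])).mul_mul_conjTranspose_same _
  have hSS : S * S = 1 + Δᵀ * Δ := by
    have hUU : (star h.1.eigenvectorUnitary : Matrix (Fin k) (Fin k) ℝ)
        * (h.1.eigenvectorUnitary : Matrix (Fin k) (Fin k) ℝ) = 1 := Unitary.coe_star_mul_self _
    conv_rhs => rw [h.1.spectral_theorem, Unitary.conjStarAlgAut_apply]
    rw [hSdef, Matrix.PosSemidef.sqrt]
    simp only [mul_assoc]
    rw [← mul_assoc (star h.1.eigenvectorUnitary : Matrix (Fin k) (Fin k) ℝ), hUU, one_mul,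
      ← mul_assoc (diagonal _), diagonal_mul_diagonal]
    congr 3
    funext i
    simp [Real.mul_self_sqrt (h.eigenvalues_nonneg i)]
  have hdet : IsUnit S.det := by
    have h2 : (0:ℝ) < (S*S).det := hSS ▸ hpd.det_pos
    rw [Matrix.det_mul] at h2
    exact (by nlinarith : S.det ≠ 0).isUnit
  have hinv : S⁻¹ * S = 1 := Matrix.nonsing_inv_mul S hdet
  have hinv' : S * S⁻¹ = 1 := Matrix.mul_nonsing_inv S hdet
  set fΔ := LinearMap.toContinuousLinearMap (Matrix.toEuclideanLin Δ) with hfΔ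
  set fS := LinearMap.toContinuousLinearMap (Matrix.toEuclideanLin S) with hfS
  set fT := LinearMap.toContinuousLinearMap (Matrix.toEuclideanLin S⁻¹) with hfT
  set g := LinearMap.toContinuousLinearMap (Matrix.toEuclideanLin (Δ * S⁻¹)) with hg
  have happ : ∀ {a b c : ℕ} (A : Matrix (Fin a) (Fin b) ℝ) (B : Matrix (Fin b) (Fin c) ℝ)
      (v : EuclideanSpace ℝ (Fin c)),
      Matrix.toEuclideanLin (A * B) v = Matrix.toEuclideanLin A (Matrix.toEuclideanLin B v) := by
    intro a b c A B v
    simp [Matrix.toEuclideanLin_apply, Matrix.mulVec_mulVec]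
  have hone : ∀ x : EuclideanSpace ℝ (Fin k),
      Matrix.toEuclideanLin (1 : Matrix (Fin k) (Fin k) ℝ) x = x := by
    intro x; simp [Matrix.toEuclideanLin_apply]
  -- key identity: ‖S x‖² = ‖x‖² + ‖Δ x‖²
  have key : ∀ x : EuclideanSpace ℝ (Fin k), ‖fS x‖^2 = ‖x‖^2 + ‖fΔ x‖^2 := by
    intro x
    have h1 : (inner ℝ (fS x) (fS x) : ℝ) = inner ℝ x ((Matrix.toEuclideanLin (S * S)) x) := by
      have hadj : Matrix.toEuclideanLin Sᴴ = LinearMap.adjoint (Matrix.toEuclideanLin S) :=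
        Matrix.toEuclideanLin_conjTranspose_eq_adjoint S
      have hSh : Sᴴ = S := hS.1
      calc (inner ℝ (fS x) (fS x) : ℝ)
          = inner ℝ (Matrix.toEuclideanLin S x) (Matrix.toEuclideanLin S x) := rfl
        _ = inner ℝ x (LinearMap.adjoint (Matrix.toEuclideanLin S) (Matrix.toEuclideanLin S x)) := by
            rw [LinearMap.adjoint_inner_right]
        _ = inner ℝ x ((Matrix.toEuclideanLin (S * S)) x) := by
            rw [← hadj, hSh, ← happ]
    have h2 : (inner ℝ x ((Matrix.toEuclideanLin (Δᵀ * Δ)) x) : ℝ) = inner ℝ (fΔ x) (fΔ x) := by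
      have hadj : Matrix.toEuclideanLin Δᴴ = LinearMap.adjoint (Matrix.toEuclideanLin Δ) :=
        Matrix.toEuclideanLin_conjTranspose_eq_adjoint Δ
      have hT : Δᴴ = Δᵀ := Matrix.conjTranspose_eq_transpose_of_trivial Δ
      calc (inner ℝ x ((Matrix.toEuclideanLin (Δᵀ * Δ)) x) : ℝ)
          = inner ℝ x (Matrix.toEuclideanLin Δᵀ (Matrix.toEuclideanLin Δ x)) := by rw [happ]
        _ = inner ℝ x (LinearMap.adjoint (Matrix.toEuclideanLin Δ) (Matrix.toEuclideanLin Δ x)) := by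
            rw [← hadj, hT]
        _ = inner ℝ (Matrix.toEuclideanLin Δ x) (Matrix.toEuclideanLin Δ x) := by
            rw [LinearMap.adjoint_inner_right]
        _ = inner ℝ (fΔ x) (fΔ x) := rfl
    have hfin : (inner ℝ x ((Matrix.toEuclideanLin (1 + Δᵀ * Δ)) x) : ℝ)
        = ‖x‖^2 + ‖fΔ x‖^2 := by
      have hma : Matrix.toEuclideanLin (1 + Δᵀ * Δ)
          = Matrix.toEuclideanLin (1 : Matrix (Fin k) (Fin k) ℝ)
            + Matrix.toEuclideanLin (Δᵀ * Δ) := map_add _ _ _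
      rw [hma]
      simp only [LinearMap.add_apply]
      rw [inner_add_right, hone, h2, real_inner_self_eq_norm_sq, real_inner_self_eq_norm_sq]
    rw [hSS] at h1
    rw [hfin] at h1
    rw [← real_inner_self_eq_norm_sq, h1]
  have hTS : ∀ x : EuclideanSpace ℝ (Fin k), fT (fS x) = x := by
    intro x
    have h5 : fT (fS x) = Matrix.toEuclideanLin (S⁻¹ * S) x := (happ S⁻¹ S x).symm
    rw [h5, hinv, hone]
  have hgapp : ∀ x, g x = fΔ (fT x) := fun x => happ Δ S⁻¹ x
  set M := matSpectralNorm Δ with hM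
  have hM0 : 0 ≤ M := norm_nonneg _
  have hden : (0:ℝ) < Real.sqrt (1 + M^2) := Real.sqrt_pos.2 (by nlinarith)
  have hgoal : matSpectralNorm (Δ * S⁻¹) = ‖g‖ := rfl
  rw [hgoal]
  rcases eq_or_lt_of_le hM0 with hM0' | hMpos
  · -- M = 0, so fΔ = 0
    have hfΔ0 : ∀ x, fΔ x = 0 := by
      intro x
      have h6 := fΔ.le_opNorm x
      rw [show ‖fΔ‖ = M from rfl, ← hM0', zero_mul] at h6
      exact norm_le_zero_iff.1 h6
    have hg0 : g = 0 := ContinuousLinearMap.ext fun x => by rw [hgapp]; simp [hfΔ0]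
    rw [hg0, ← hM0']
    simp
  · apply le_antisymm
    · -- upper bound
      apply ContinuousLinearMap.opNorm_le_bound _ (by positivity)
      intro y
      rw [hgapp]
      set x := fT y with hx
      have hyx : y = fS x := by
        rw [hx]
        have h5 : fS (fT y) = Matrix.toEuclideanLin (S * S⁻¹) y := (happ S S⁻¹ y).symm
        rw [h5, hinv', hone]
      have hkey := key x
      have hΔx : ‖fΔ x‖ ≤ M * ‖x‖ := fΔ.le_opNorm x
      rw [hyx, ← Real.sqrt_sq (norm_nonneg (fS x)), hkey]
      set a := ‖fΔ x‖ with ha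
      set b := ‖x‖ with hb
      have ha0 : 0 ≤ a := norm_nonneg _
      have hb0 : 0 ≤ b := norm_nonneg _
      have hsq : a^2 * (1 + M^2) ≤ M^2 * (b^2 + a^2) := by nlinarith
      have h5 : a * Real.sqrt (1 + M^2) ≤ M * Real.sqrt (b^2 + a^2) := by
        have h7 := Real.sqrt_le_sqrt hsq
        rwa [Real.sqrt_mul (by positivity), Real.sqrt_mul (by positivity),
          Real.sqrt_sq ha0, Real.sqrt_sq hM0] at h7
      rw [div_mul_eq_mul_div, le_div_iff₀ hden]
      linarith
    · -- lower bound
      obtain ⟨x, hx1, hxM⟩ := exists_norm_eq_opNorm' fΔ (by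
        intro hc
        rw [show M = ‖fΔ‖ from rfl, hc] at hMpos
        simp at hMpos)
      have hxM' : ‖fΔ x‖ = M := hxM
      have hy : ‖fS x‖^2 = 1 + M^2 := by rw [key x, hx1, hxM']; ring
      have hyn : ‖fS x‖ = Real.sqrt (1 + M^2) := by
        rw [← hy, Real.sqrt_sq (norm_nonneg _)]
      have hgy : g (fS x) = fΔ x := by rw [hgapp, hTS]
      have h6 := g.le_opNorm (fS x)
      rw [hgy, hxM', hyn] at h6
      rw [div_le_iff₀ hden]
      linarith
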